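/- arXiv:math/9911094 — 2 statements merged into one kernel-verified Lean document; each statement's English description precedes it below -/
import Mathlib

section
/- Let f ∈ ℂ_p[x_1,...,x_n] be a nonzero polynomial and Ω ⊂ 𝔸^n(ℂ_p) a nonempty Zariski open set. Then the Gauss norm |f|_p (the maximum of the p-adic absolute values of the coefficients of f) equals max{ |f(z)|_p : z ∈ Ω, |z_i|_p = 1 for all i }. -/
open MvPolynomial

/-- The Gauss norm of a multivariate polynomial over a normed field:
the maximum of the norms of its coefficients. -/
noncomputable def gaussNorm {K : Type*} [NontriviallyNormedField K] {n : ℕ}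
    (f : MvPolynomial (Fin n) K) : NNReal :=
  f.support.sup fun α => ‖f.coeff α‖₊

section Aux

variable {K : Type*} [NontriviallyNormedField K] [IsUltrametricDist K] {n : ℕ}

lemma coeff_le_gaussNorm (f : MvPolynomial (Fin n) K) (α : Fin n →₀ ℕ) :
    ‖f.coeff α‖₊ ≤ gaussNorm f := by
  by_cases h : α ∈ f.support
  · rw [gaussNorm]; exact Finset.le_sup (f := fun α => ‖f.coeff α‖₊) h
  · rw [MvPolynomial.notMem_support_iff.mp h]
    simp

lemma gaussNorm_pos {f : MvPolynomial (Fin n) K} (hf : f ≠ 0) : 0 < gaussNorm f := by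
  obtain ⟨α, hα⟩ := MvPolynomial.ne_zero_iff.mp hf
  calc (0 : NNReal) < ‖f.coeff α‖₊ := by simpa using hα
  _ ≤ gaussNorm f := coeff_le_gaussNorm f α

lemma eval_le_gaussNorm (f : MvPolynomial (Fin n) K) {z : Fin n → K}
    (hz : ∀ i, ‖z i‖₊ ≤ 1) : ‖MvPolynomial.eval z f‖₊ ≤ gaussNorm f := by
  rw [MvPolynomial.eval_eq']
  rw [gaussNorm]
  refine le_trans (Finset.nnnorm_sum_le_sup_nnnorm _ _) (Finset.sup_le fun α hα => ?_)
  calc ‖f.coeff α * ∏ i, z i ^ α i‖₊ = ‖f.coeff α‖₊ * ∏ i, ‖z i‖₊ ^ α i := by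
        rw [nnnorm_mul]
        congr 1
        rw [nnnorm_prod]
        exact Finset.prod_congr rfl fun i _ => nnnorm_pow _ _
  _ ≤ ‖f.coeff α‖₊ * 1 := by
        refine mul_le_mul_right (Finset.prod_le_one (fun _ _ => zero_le) fun i _ => ?_) _
        exact pow_le_one' (hz i) _
  _ ≤ gaussNorm f := by rw [mul_one]; exact coeff_le_gaussNorm f α

end Aux

section Mul

open scoped MonomialOrder

variable {K : Type*} [NontriviallyNormedField K] [IsUltrametricDist K] {n : ℕ}

lemma exists_min_attain (f : MvPolynomial (Fin n) K) (hf : f ≠ 0) :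
    ∃ d : Fin n →₀ ℕ, ‖f.coeff d‖₊ = gaussNorm f ∧
      ∀ u : Fin n →₀ ℕ, (MonomialOrder.lex.toSyn u < MonomialOrder.lex.toSyn d) →
        ‖f.coeff u‖₊ < gaussNorm f := by
  classical
  set m := (MonomialOrder.lex : MonomialOrder (Fin n)) with hm
  set S := f.support.filter (fun α => ‖f.coeff α‖₊ = gaussNorm f) with hS
  have hSne : S.Nonempty := by
    obtain ⟨α, hmem, hα⟩ := Finset.exists_mem_eq_sup f.support
      (MvPolynomial.support_nonempty.mpr hf) (fun α => ‖f.coeff α‖₊)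
    exact ⟨α, Finset.mem_filter.mpr ⟨hmem, hα.symm⟩⟩
  have hAne : (S.image m.toSyn).Nonempty := hSne.image _
  obtain ⟨α, hαS, hα⟩ := Finset.mem_image.mp ((S.image m.toSyn).min'_mem hAne)
  refine ⟨α, (Finset.mem_filter.mp hαS).2, fun u hu => ?_⟩
  rcases lt_or_eq_of_le (coeff_le_gaussNorm f u) with h | h
  · exact h
  · exfalso
    have humem : u ∈ S := Finset.mem_filter.mpr
      ⟨MvPolynomial.mem_support_iff.mpr (fun h0 => by
          rw [h0] at h; simp at h
          exact (gaussNorm_pos hf).ne h), h⟩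
    have hle : (S.image m.toSyn).min' hAne ≤ m.toSyn u :=
      Finset.min'_le _ _ (Finset.mem_image_of_mem _ humem)
    rw [← hα] at hle
    exact absurd hu (not_lt.mpr hle)

lemma gaussNorm_mul_ge (f g : MvPolynomial (Fin n) K) (hf : f ≠ 0) (hg : g ≠ 0) :
    gaussNorm f * gaussNorm g ≤ gaussNorm (f * g) := by
  classical
  set m := (MonomialOrder.lex : MonomialOrder (Fin n)) with hm
  obtain ⟨a, ha, hamin⟩ := exists_min_attain f hf
  obtain ⟨b, hb, hbmin⟩ := exists_min_attain g hg
  have hpos : (0:NNReal) < gaussNorm f * gaussNorm g :=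
    mul_pos (gaussNorm_pos hf) (gaussNorm_pos hg)
  have key : ‖(f * g).coeff (a + b)‖₊ = gaussNorm f * gaussNorm g := by
    rw [MvPolynomial.coeff_mul]
    have hmem : ((a, b) : (Fin n →₀ ℕ) × (Fin n →₀ ℕ)) ∈ Finset.HasAntidiagonal.antidiagonal (a + b) :=
      Finset.HasAntidiagonal.mem_antidiagonal.mpr rfl
    rw [← Finset.add_sum_erase _ _ hmem]
    have hmain : ‖f.coeff a * g.coeff b‖₊ = gaussNorm f * gaussNorm g := by
      rw [nnnorm_mul, ha, hb]
    have hrest : ‖∑ x ∈ (Finset.HasAntidiagonal.antidiagonal (a+b)).erase (a,b),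
        f.coeff x.1 * g.coeff x.2‖₊ < gaussNorm f * gaussNorm g := by
      refine lt_of_le_of_lt (Finset.nnnorm_sum_le_sup_nnnorm _ _) ?_
      rw [Finset.sup_lt_iff hpos]
      rintro ⟨u, v⟩ hx
      obtain ⟨hne, hx⟩ := Finset.mem_erase.mp hx
      have hsum : u + v = a + b := Finset.HasAntidiagonal.mem_antidiagonal.mp hx
      have hsyn : m.toSyn u + m.toSyn v = m.toSyn a + m.toSyn b := by
        rw [← map_add, ← map_add, hsum]
      have hune : u ≠ a := by
        rintro rfl
        rw [add_right_inj] at hsum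
        exact hne (by rw [hsum])
      rcases lt_or_gt_of_ne (fun h : m.toSyn u = m.toSyn a =>
          hune (m.toSyn.injective h)) with h | h
      · calc ‖f.coeff u * g.coeff v‖₊ = ‖f.coeff u‖₊ * ‖g.coeff v‖₊ := nnnorm_mul _ _
          _ ≤ ‖f.coeff u‖₊ * gaussNorm g := mul_le_mul_right (coeff_le_gaussNorm g v) _
          _ < gaussNorm f * gaussNorm g :=
            mul_lt_mul_of_pos_right (hamin u h) (gaussNorm_pos hg)
      · have hv : m.toSyn v < m.toSyn b := by
          have : m.toSyn a + m.toSyn v < m.toSyn u + m.toSyn v := by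
            exact add_lt_add_left h _
          rw [hsyn] at this
          exact lt_of_add_lt_add_left this
        calc ‖f.coeff u * g.coeff v‖₊ = ‖f.coeff u‖₊ * ‖g.coeff v‖₊ := nnnorm_mul _ _
          _ ≤ gaussNorm f * ‖g.coeff v‖₊ := mul_le_mul_left (coeff_le_gaussNorm f u) _
          _ < gaussNorm f * gaussNorm g :=
            mul_lt_mul_of_pos_left (hbmin v hv) (gaussNorm_pos hf)
    rw [IsUltrametricDist.nnnorm_add_eq_max_of_nnnorm_ne_nnnorm
        (by rw [hmain]; exact hrest.ne'),
      hmain, max_eq_left (le_of_lt hrest)]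
  exact key ▸ coeff_le_gaussNorm (f*g) (a+b)

end Mul

section Prime

variable {K : Type*} [NontriviallyNormedField K] [IsUltrametricDist K]

lemma exists_prime_nnnorm_one (K : Type*) [NontriviallyNormedField K] [IsUltrametricDist K]
    (B : ℕ) : ∃ q : ℕ, q.Prime ∧ B < q ∧ ‖(q : K)‖₊ = 1 := by
  obtain ⟨p₁, hp₁B, hp₁⟩ := Nat.exists_infinite_primes (B + 1)
  obtain ⟨p₂, hp₂B, hp₂⟩ := Nat.exists_infinite_primes (p₁ + 1)
  have hne : p₁ ≠ p₂ := by omega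
  by_cases h1 : ‖(p₁ : K)‖₊ = 1
  · exact ⟨p₁, hp₁, by omega, h1⟩
  by_cases h2 : ‖(p₂ : K)‖₊ = 1
  · exact ⟨p₂, hp₂, by omega, h2⟩
  exfalso
  have hlt1 : ‖(p₁ : K)‖₊ < 1 := lt_of_le_of_ne (IsUltrametricDist.nnnorm_natCast_le_one K p₁) h1
  have hlt2 : ‖(p₂ : K)‖₊ < 1 := lt_of_le_of_ne (IsUltrametricDist.nnnorm_natCast_le_one K p₂) h2
  have hcop : Nat.Coprime p₁ p₂ := (Nat.coprime_primes hp₁ hp₂).mpr hne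
  have hbez : (Nat.gcd p₁ p₂ : ℤ) = p₁ * Nat.gcdA p₁ p₂ + p₂ * Nat.gcdB p₁ p₂ :=
    Nat.gcd_eq_gcd_ab p₁ p₂
  rw [hcop.gcd_eq_one] at hbez
  have hK : (1 : K) = (p₁ : K) * ((Nat.gcdA p₁ p₂ : ℤ) : K)
      + (p₂ : K) * ((Nat.gcdB p₁ p₂ : ℤ) : K) := by
    have := congrArg (fun z : ℤ => (z : K)) hbez
    push_cast at this ⊢
    exact this
  have : (1 : NNReal) ≤ max (‖(p₁ : K) * ((Nat.gcdA p₁ p₂ : ℤ) : K)‖₊)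
      (‖(p₂ : K) * ((Nat.gcdB p₁ p₂ : ℤ) : K)‖₊) := by
    calc (1:NNReal) = ‖(1:K)‖₊ := by simp
    _ ≤ _ := by rw [hK]; exact IsUltrametricDist.nnnorm_add_le_max _ _
  have hb1 : ‖(p₁ : K) * ((Nat.gcdA p₁ p₂ : ℤ) : K)‖₊ < 1 := by
    rw [nnnorm_mul]
    calc ‖(p₁ : K)‖₊ * ‖((Nat.gcdA p₁ p₂ : ℤ) : K)‖₊ ≤ ‖(p₁ : K)‖₊ * 1 :=
      mul_le_mul_right (IsUltrametricDist.nnnorm_intCast_le_one K _) _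
    _ < 1 := by rwa [mul_one]
  have hb2 : ‖(p₂ : K) * ((Nat.gcdB p₁ p₂ : ℤ) : K)‖₊ < 1 := by
    rw [nnnorm_mul]
    calc ‖(p₂ : K)‖₊ * ‖((Nat.gcdB p₁ p₂ : ℤ) : K)‖₊ ≤ ‖(p₂ : K)‖₊ * 1 :=
      mul_le_mul_right (IsUltrametricDist.nnnorm_intCast_le_one K _) _
    _ < 1 := by rwa [mul_one]
  exact absurd this (not_le.mpr (max_lt hb1 hb2))

end Prime

section Torus

variable {K : Type*} [NontriviallyNormedField K] [IsUltrametricDist K]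
  [IsAlgClosed K] [CharZero K] {n : ℕ}

lemma nnnorm_eq_one_of_pow_eq_one {x : K} {q : ℕ} (hq : q ≠ 0) (h : x ^ q = 1) :
    ‖x‖₊ = 1 := by
  have h1 : ‖x‖₊ ^ q = 1 := by rw [← nnnorm_pow, h, nnnorm_one]
  exact (pow_eq_one_iff.mp h1).resolve_right hq

lemma exists_torus_point (h : MvPolynomial (Fin n) K) (hh : h ≠ 0) :
    ∃ z : Fin n → K, (∀ i, ‖z i‖₊ = 1) ∧ ‖MvPolynomial.eval z h‖₊ = gaussNorm h := by
  classical
  obtain ⟨α₀, hα₀mem, hα₀⟩ := Finset.exists_mem_eq_sup h.support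
    (MvPolynomial.support_nonempty.mpr hh) (fun α => ‖h.coeff α‖₊)
  obtain ⟨q, hq, hqB, hqnorm⟩ := exists_prime_nnnorm_one K h.totalDegree
  have hq0 : q ≠ 0 := hq.ne_zero
  have hqK : NeZero ((q : ℕ) : K) := ⟨Nat.cast_ne_zero.mpr hq0⟩
  have hdeg : ∀ β ∈ h.support, ∀ i, β i < q := by
    intro β hβ i
    have h1 : β i ≤ β.sum fun _ e => e := by
      by_cases hi : i ∈ β.support
      · exact Finset.single_le_sum (f := fun j => β j) (fun j _ => Nat.zero_le _) hi
      · simp [Finsupp.notMem_support_iff.mp hi]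
    have h2 : (β.sum fun _ e => e) ≤ h.totalDegree := MvPolynomial.le_totalDegree hβ
    omega
  obtain ⟨ζ, hζ⟩ := HasEnoughRootsOfUnity.exists_primitiveRoot K q
  have hζ1 : ζ ^ q = 1 := hζ.pow_eq_one
  have hζn : ‖ζ‖₊ = 1 := nnnorm_eq_one_of_pow_eq_one hq0 hζ1
  set w : K := ζ⁻¹ with hw
  have hwn : ‖w‖₊ = 1 := by rw [hw, nnnorm_inv, hζn, inv_one]
  set Z : (Fin n → Fin q) → (Fin n → K) := fun k i => ζ ^ (k i : ℕ) with hZ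
  have hZnorm : ∀ k i, ‖Z k i‖₊ = 1 := fun k i => by
    rw [hZ]; simp only [nnnorm_pow, hζn, one_pow]
  have key : ∑ k : Fin n → Fin q, (∏ i, w ^ (α₀ i * (k i : ℕ))) * MvPolynomial.eval (Z k) h
      = (q : K) ^ n * h.coeff α₀ := by
    have expand : ∀ k : Fin n → Fin q,
        (∏ i, w ^ (α₀ i * (k i : ℕ))) * MvPolynomial.eval (Z k) h
        = ∑ β ∈ h.support, h.coeff β * ∏ i, (ζ ^ (β i) * w ^ (α₀ i)) ^ (k i : ℕ) := by
      intro k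
      rw [MvPolynomial.eval_eq', Finset.mul_sum]
      refine Finset.sum_congr rfl fun β hβ => ?_
      have hterm : ∀ i, (ζ ^ (β i) * w ^ (α₀ i)) ^ (k i : ℕ)
          = (ζ ^ (k i : ℕ)) ^ (β i) * w ^ (α₀ i * (k i : ℕ)) := by
        intro i
        rw [mul_pow, ← pow_mul, ← pow_mul, ← pow_mul']
      rw [Finset.prod_congr rfl (fun i _ => hterm i), Finset.prod_mul_distrib]
      simp only [hZ]
      ring
    rw [Finset.sum_congr rfl (fun k _ => expand k), Finset.sum_comm]
    have inner : ∀ β ∈ h.support,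
        (∑ k : Fin n → Fin q, h.coeff β * ∏ i, (ζ ^ (β i) * w ^ (α₀ i)) ^ (k i : ℕ))
        = h.coeff β * (if β = α₀ then (q : K) ^ n else 0) := by
      intro β hβ
      rw [← Finset.mul_sum]
      congr 1
      have hswap : (∑ k : Fin n → Fin q, ∏ i, (ζ ^ (β i) * w ^ (α₀ i)) ^ (k i : ℕ))
          = ∏ i, ∑ j : Fin q, (ζ ^ (β i) * w ^ (α₀ i)) ^ (j : ℕ) := by
        rw [← Fintype.piFinset_univ]
        exact Finset.sum_prod_piFinset (ι := Fin n) (Finset.univ : Finset (Fin q)) fun i j => (ζ ^ β i * w ^ α₀ i) ^ ((j : Fin q) : ℕ)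
      rw [hswap]
      by_cases hb : β = α₀
      · subst hb
        rw [if_pos rfl]
        have hone : ∀ i : Fin n, ζ ^ (β i) * w ^ (β i) = 1 := by
          intro i
          rw [hw, inv_pow, mul_inv_cancel₀ (pow_ne_zero _ (hζ.ne_zero hq0))]
        calc (∏ i, ∑ j : Fin q, (ζ ^ (β i) * w ^ (β i)) ^ (j : ℕ))
            = ∏ _i : Fin n, (q : K) := by
              refine Finset.prod_congr rfl fun i _ => ?_
              rw [hone i]
              simp
        _ = (q : K) ^ n := by simp
      · rw [if_neg hb]
        have : ∃ i, β i ≠ α₀ i := by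
          by_contra hc
          push_neg at hc
          exact hb (Finsupp.ext hc)
        obtain ⟨i, hi⟩ := this
        refine Finset.prod_eq_zero (Finset.mem_univ i) ?_
        set u : K := ζ ^ (β i) * w ^ (α₀ i) with hu
        have huq : u ^ q = 1 := by
          rw [hu, mul_pow, ← pow_mul, ← pow_mul, mul_comm (β i) q, mul_comm (α₀ i) q,
            pow_mul, pow_mul, hζ1, hw, inv_pow, hζ1, one_pow, inv_one, one_pow, one_mul]
        have hu1 : u ≠ 1 := by
          intro h1
          apply hi
          refine hζ.pow_inj (hdeg β hβ i) (hdeg α₀ hα₀mem i) ?_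
          have h2 : ζ ^ (β i) * (ζ ^ (α₀ i))⁻¹ = 1 := by
            rw [← inv_pow, ← hw]; exact h1
          exact (mul_inv_eq_one₀ (pow_ne_zero _ (hζ.ne_zero hq0))).mp h2
        calc (∑ j : Fin q, u ^ (j : ℕ)) = ∑ j ∈ Finset.range q, u ^ j :=
              Fin.sum_univ_eq_sum_range _ _
        _ = (u ^ q - 1) / (u - 1) := geom_sum_eq hu1 q
        _ = 0 := by rw [huq, sub_self, zero_div]
    rw [Finset.sum_congr rfl inner, Finset.sum_eq_single α₀
      (fun β _ hβ => by rw [if_neg hβ, mul_zero])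
      (fun habs => absurd hα₀mem habs), if_pos rfl, mul_comm]
  have hqpos : NeZero q := ⟨hq0⟩
  have hnorm : gaussNorm h ≤ Finset.univ.sup
      (fun k : Fin n → Fin q => ‖MvPolynomial.eval (Z k) h‖₊) := by
    have h1 : ‖(q : K) ^ n * h.coeff α₀‖₊ = gaussNorm h := by
      rw [nnnorm_mul, nnnorm_pow, hqnorm, one_pow, one_mul]
      exact hα₀.symm
    rw [← h1, ← key]
    refine le_trans (Finset.nnnorm_sum_le_sup_nnnorm _ _) (Finset.sup_le fun k _ => ?_)
    have h2 : ‖∏ i, w ^ (α₀ i * (k i : ℕ))‖₊ = 1 := by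
      rw [nnnorm_prod]
      refine Finset.prod_eq_one fun i _ => ?_
      rw [nnnorm_pow, hwn, one_pow]
    rw [nnnorm_mul, h2, one_mul]
    exact Finset.le_sup (f := fun k => ‖MvPolynomial.eval (Z k) h‖₊) (Finset.mem_univ k)
  obtain ⟨k, _, hk⟩ := Finset.exists_mem_eq_sup Finset.univ Finset.univ_nonempty
    (fun k : Fin n → Fin q => ‖MvPolynomial.eval (Z k) h‖₊)
  refine ⟨Z k, hZnorm k, le_antisymm
    (eval_le_gaussNorm h (fun i => le_of_eq (hZnorm k i))) ?_⟩
  rw [hk] at hnorm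
  exact hnorm

end Torus

/-- Over `ℂ_p` (modelled as a complete algebraically closed nontrivially normed
field of characteristic zero with ultrametric norm), for any nonzero polynomial `f`
and any nonempty Zariski open set `Ω ⊆ 𝔸^n`, the Gauss norm of `f` is the maximum
of `|f(z)|` over points `z ∈ Ω` all of whose coordinates have norm `1`. -/
theorem stmt2 {K : Type*} [NontriviallyNormedField K] [IsUltrametricDist K]
    [IsAlgClosed K] [CompleteSpace K] [CharZero K]
    (n : ℕ) (f : MvPolynomial (Fin n) K) (hf : f ≠ 0)
    (Ω : Set (Fin n → K))
    (hopen : ∃ I : Ideal (MvPolynomial (Fin n) K), Ω = (MvPolynomial.zeroLocus K I)ᶜ)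
    (hne : Ω.Nonempty) :
    IsGreatest {x : NNReal | ∃ z ∈ Ω, (∀ i, ‖z i‖₊ = 1) ∧ x = ‖MvPolynomial.eval z f‖₊}
      (gaussNorm f) := by
  obtain ⟨I, rfl⟩ := hopen
  obtain ⟨z₀, hz₀⟩ := hne
  rw [Set.mem_compl_iff, MvPolynomial.mem_zeroLocus_iff] at hz₀
  push_neg at hz₀
  obtain ⟨g, hgI, hgz₀⟩ := hz₀
  have hg : g ≠ 0 := fun h0 => hgz₀ (by rw [h0]; simp)
  have hfg : f * g ≠ 0 := mul_ne_zero hf hg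
  obtain ⟨z, hz1, hz⟩ := exists_torus_point (f * g) hfg
  rw [map_mul, nnnorm_mul] at hz
  have hfle : ‖MvPolynomial.eval z f‖₊ ≤ gaussNorm f :=
    eval_le_gaussNorm f (fun i => le_of_eq (hz1 i))
  have hgle : ‖MvPolynomial.eval z g‖₊ ≤ gaussNorm g :=
    eval_le_gaussNorm g (fun i => le_of_eq (hz1 i))
  have hge : gaussNorm f * gaussNorm g
      ≤ ‖MvPolynomial.eval z f‖₊ * ‖MvPolynomial.eval z g‖₊ := by
    rw [hz]; exact gaussNorm_mul_ge f g hf hg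
  have hfeq : ‖MvPolynomial.eval z f‖₊ = gaussNorm f := by
    by_contra hne'
    have h1 : ‖MvPolynomial.eval z f‖₊ < gaussNorm f := lt_of_le_of_ne hfle hne'
    have h2 : ‖MvPolynomial.eval z f‖₊ * ‖MvPolynomial.eval z g‖₊
        < gaussNorm f * gaussNorm g := by
      calc ‖MvPolynomial.eval z f‖₊ * ‖MvPolynomial.eval z g‖₊
          ≤ ‖MvPolynomial.eval z f‖₊ * gaussNorm g := mul_le_mul_right hgle _
        _ < gaussNorm f * gaussNorm g := mul_lt_mul_of_pos_right h1 (gaussNorm_pos hg)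
    exact absurd hge (not_le.mpr h2)
  have hgne : MvPolynomial.eval z g ≠ 0 := by
    intro h0
    rw [h0, nnnorm_zero, mul_zero] at hge
    exact absurd hge (not_le.mpr (mul_pos (gaussNorm_pos hf) (gaussNorm_pos hg)))
  constructor
  · refine ⟨z, ?_, hz1, hfeq.symm⟩
    rw [Set.mem_compl_iff, MvPolynomial.mem_zeroLocus_iff]
    push_neg
    exact ⟨g, hgI, hgne⟩
  · rintro x ⟨z', _, hz'1, rfl⟩
    exact eval_le_gaussNorm f (fun i => le_of_eq (hz'1 i))
end

section
/- Let F be a field of characteristic zero containing the q-th roots of unity for some integer q > D, let M be a commutative F-algebra of dimension D, and let f, g ∈ M. Write N(h) for the determinant of the multiplication-by-h map on M and Tr(h) for its trace, and let f* be the adjoint element satisfying f*·f = N(f)·1 (defined from the characteristic polynomial of f). Consider Q(t) := N_{M[t]}(t f - g), the determinant of multiplication by (t f - g) on M ⊗_F F[t], a polynomial of degree ≤ D in t with coefficients Q = c_D t^D + ... + c_0. Then Tr(f* g) = -c_{D-1}, and consequently Tr(f* g) = -(1/q) Σ_{ω ∈ G_q} N(ω f - g) ω^{1-D}, where G_q is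 the group of q-th roots of unity in F. -/
open Polynomial Matrix

set_option linter.unusedSectionVars false
open Polynomial Matrix

section Aux
variable {ι : Type*} [Fintype ι] [DecidableEq ι] {α : Type*} [CommRing α]

lemma det_add_expand (A B : Matrix ι ι α) :
    (A + B).det = ∑ S : Finset ι, (Matrix.of (S.piecewise A B)).det :=
  (Matrix.detRowAlternating (R := α) (n := ι)).toMultilinearMap.map_add_univ A B

lemma det_piecewise_smul (x : α) (A B : Matrix ι ι α) (S : Finset ι) :
    (Matrix.of (S.piecewise (x • A) B)).det
      = x ^ S.card * (Matrix.of (S.piecewise A B)).det := by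
  have h : (S.piecewise ((x • A : Matrix ι ι α) : ι → ι → α) B)
      = S.piecewise (fun i => x • (S.piecewise (A : ι → ι → α) B i)) (S.piecewise A B) := by
    funext i
    by_cases h : i ∈ S <;> funext j <;> simp [Finset.piecewise, h, Matrix.smul_apply]
  rw [show (Matrix.of (S.piecewise (x • A) B))
      = Matrix.of (S.piecewise (fun i => x • S.piecewise (A : ι → ι → α) B i) (S.piecewise A B))
    from congrArg _ h]
  exact (Matrix.detRowAlternating.toMultilinearMap.map_piecewise_smul (fun _ => x)
    (S.piecewise (A : ι → ι → α) B) S).trans (by rw [Finset.prod_const, smul_eq_mul]; rfl)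

lemma det_X_smul_sub (A B : Matrix ι ι α) :
    ((X : α[X]) • A.map C - B.map C).det
      = ∑ S : Finset ι,
          Polynomial.monomial S.card ((Matrix.of (S.piecewise A (-B))).det) := by
  have h0 : ((X : α[X]) • A.map C - B.map C) = (X : α[X]) • A.map C + (-B).map C := by
    ext i j
    simp [sub_eq_add_neg]
  rw [h0, det_add_expand]
  refine Finset.sum_congr rfl fun S _ => ?_
  have h2 : (S.piecewise ((A.map C : Matrix ι ι α[X]) : ι → ι → α[X]) ((-B).map C))
      = ((Matrix.of (S.piecewise A (-B)) : Matrix ι ι α).map C : ι → ι → α[X]) := by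
    funext i
    by_cases h : i ∈ S <;> · funext j; simp [Finset.piecewise, Matrix.map_apply, h]
  have h3 : (Matrix.of (S.piecewise ((X : α[X]) • A.map C) ((-B).map C))).det
      = (X : α[X]) ^ S.card * (Matrix.of (S.piecewise (A.map C) ((-B).map C))).det :=
    det_piecewise_smul _ _ _ _
  rw [h3]
  show (X : α[X]) ^ S.card *
      (Matrix.of (S.piecewise ((A.map C : Matrix ι ι α[X]) : ι → ι → α[X]) ((-B).map C))).det = _
  rw [h2]
  show (X : α[X]) ^ S.card * ((Matrix.of (S.piecewise A (-B)) : Matrix ι ι α).map C).det = _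
  rw [show ((Matrix.of (S.piecewise A (-B)) : Matrix ι ι α).map C).det
      = Polynomial.C (Matrix.of (S.piecewise A (-B)) : Matrix ι ι α).det
    from ((C : α →+* α[X]).map_det _).symm]
  rw [mul_comm, Polynomial.C_mul_X_pow_eq_monomial]


lemma natDegree_det_X_smul_sub (A B : Matrix ι ι α) :
    ((X : α[X]) • A.map C - B.map C).det.natDegree ≤ Fintype.card ι := by
  rw [det_X_smul_sub]
  refine Polynomial.natDegree_sum_le_of_forall_le _ _ fun S _ => ?_
  exact (Polynomial.natDegree_monomial_le _).trans
    ((Finset.card_le_univ S).trans_eq (Finset.card_univ))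

lemma eval_det_X_smul_sub (A B : Matrix ι ι α) (t : α) :
    ((X : α[X]) • A.map C - B.map C).det.eval t = (t • A - B).det := by
  rw [show (((X : α[X]) • A.map C - B.map C).det.eval t)
      = (Polynomial.evalRingHom t) ((X : α[X]) • A.map C - B.map C).det from rfl,
    RingHom.map_det]
  congr 1
  ext i j
  simp only [RingHom.mapMatrix_apply, Matrix.map_apply, Matrix.sub_apply, Matrix.smul_apply,
    smul_eq_mul, _root_.map_mul, _root_.map_sub, Polynomial.coe_evalRingHom, Polynomial.eval_mul,
    Polynomial.eval_X, Polynomial.eval_C, Polynomial.eval_sub]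

lemma coeff_det_X_smul_sub (h1 : 1 ≤ Fintype.card ι) (A B : Matrix ι ι α) :
    ((X : α[X]) • A.map C - B.map C).det.coeff (Fintype.card ι - 1)
      = -Matrix.trace (B * adjugate A) := by
  classical
  rw [det_X_smul_sub, Polynomial.finset_sum_coeff]
  simp_rw [Polynomial.coeff_monomial]
  rw [Finset.sum_ite, Finset.sum_const_zero, add_zero]
  have himg : (Finset.univ.filter fun S : Finset ι => S.card = Fintype.card ι - 1)
      = Finset.univ.image fun i : ι => ({i}ᶜ : Finset ι) := by
    ext S
    simp only [Finset.mem_filter, Finset.mem_image, Finset.mem_univ, true_and]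
    constructor
    · intro hS
      have hc : Sᶜ.card = 1 := by
        rw [Finset.card_compl, hS]
        omega
      obtain ⟨i, hi⟩ := Finset.card_eq_one.mp hc
      exact ⟨i, by rw [← hi, compl_compl]⟩
    · rintro ⟨i, rfl⟩
      rw [Finset.card_compl, Finset.card_singleton]
  rw [himg, Finset.sum_image (fun i _ j _ h => by
    simpa using congrArg (fun s : Finset ι => sᶜ) h)]
  have hupd : ∀ i : ι, (Matrix.of (({i}ᶜ : Finset ι).piecewise A (-B)))
      = A.updateRow i (-(B i)) := by
    intro i
    ext j k
    by_cases h : j = i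
    · subst h; simp [Finset.piecewise, Matrix.updateRow_self]
    · simp [Finset.piecewise, h, Matrix.updateRow_ne h]
  have hdet : ∀ i : ι, (A.updateRow i (-(B i))).det = -(A.updateRow i (B i)).det := by
    intro i
    rw [show (-(B i)) = (-1 : α) • (B i) from by funext k; simp,
      Matrix.det_updateRow_smul]
    ring
  have hrow : ∀ i : ι, (A.updateRow i (B i)).det = ∑ j, B i j * adjugate A j i := by
    intro i
    have h := Matrix.det_eq_sum_mul_adjugate_row (A.updateRow i (B i)) i
    have hadj : ∀ j, adjugate (A.updateRow i (B i)) j i = adjugate A j i := by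
      intro j
      rw [Matrix.adjugate_apply, Matrix.adjugate_apply]
      congr 1
      ext a c
      by_cases h' : a = i
      · subst h'; simp [Matrix.updateRow_self]
      · simp [Matrix.updateRow_ne h']
    simp only [Matrix.updateRow_self] at h
    simp_rw [hadj] at h
    exact h
  simp_rw [hupd, hdet, hrow]
  rw [Matrix.trace]
  simp_rw [Matrix.diag_apply, Matrix.mul_apply]
  rw [← Finset.sum_neg_distrib]

lemma adjugate_eq_poly_aux [Nontrivial α] (h1 : 1 ≤ Fintype.card ι)
    (A : Matrix ι ι α) (hA : IsRegular A.det) :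
    adjugate A = (-1 : α) ^ (Fintype.card ι - 1) •
      ∑ i ∈ Finset.range (Fintype.card ι), A.charpoly.coeff (i + 1) • A ^ i := by
  obtain ⟨m, hm⟩ : ∃ m, Fintype.card ι = m + 1 := ⟨_, (Nat.succ_pred_eq_of_pos h1).symm⟩
  apply (Matrix.isRegular_of_isLeftRegular_det hA.left).left
  show A * adjugate A = A * _
  rw [Matrix.mul_adjugate, Matrix.mul_smul, Finset.mul_sum]
  simp_rw [Matrix.mul_smul, ← pow_succ']
  have hCH := Matrix.aeval_self_charpoly A
  rw [Polynomial.aeval_eq_sum_range, Matrix.charpoly_natDegree_eq_dim,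
    Finset.sum_range_succ'] at hCH
  have hsum : ∑ i ∈ Finset.range (Fintype.card ι), A.charpoly.coeff (i + 1) • A ^ (i + 1)
      = -(A.charpoly.coeff 0 • 1) := by
    rw [eq_neg_iff_add_eq_zero]
    simpa using hCH
  rw [hsum, Matrix.det_eq_sign_charpoly_coeff, smul_neg, ← neg_smul, smul_smul, hm]
  congr 1
  rw [Nat.add_sub_cancel, pow_succ]
  ring

lemma matrix_map_smul (e : α[X] →+* α) (x : α[X]) (N : Matrix ι ι α[X]) :
    (x • N).map e = e x • N.map e := by
  ext i j
  simp [Matrix.map_apply, Matrix.smul_apply]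

lemma adjugate_eq_poly [Nontrivial α] (h1 : 1 ≤ Fintype.card ι) (A : Matrix ι ι α) :
    adjugate A = (-1 : α) ^ (Fintype.card ι - 1) •
      ∑ i ∈ Finset.range (Fintype.card ι), A.charpoly.coeff (i + 1) • A ^ i := by
  set gA : Matrix ι ι α[X] := A.map Polynomial.C + (Polynomial.X : α[X]) • (1 : Matrix ι ι α[X])
    with hgA
  have hmonic : gA.det.Monic := by
    have h := Polynomial.leadingCoeff_det_X_one_add_C (n := ι) A
    rw [Polynomial.Monic.def, hgA, add_comm]
    exact h
  have key := adjugate_eq_poly_aux h1 gA hmonic.isRegular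
  set e : α[X] →+* α := Polynomial.evalRingHom 0 with he
  have hmap : gA.map e = A := by
    ext i j
    by_cases h : i = j <;>
      simp [hgA, he, Matrix.map_apply, Matrix.smul_apply, Matrix.one_apply, h]
  have hcoeff : ∀ k, e (gA.charpoly.coeff k) = A.charpoly.coeff k := by
    intro k
    rw [← hmap, Matrix.charpoly_map, Polynomial.coeff_map]
  have hsum : (e.mapMatrix) (∑ i ∈ Finset.range (Fintype.card ι), gA.charpoly.coeff (i + 1) • gA ^ i)
      = ∑ i ∈ Finset.range (Fintype.card ι), A.charpoly.coeff (i + 1) • A ^ i := by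
    rw [map_sum]
    refine Finset.sum_congr rfl fun i _ => ?_
    rw [RingHom.mapMatrix_apply, matrix_map_smul, hcoeff, ← RingHom.mapMatrix_apply, map_pow,
      RingHom.mapMatrix_apply, hmap]
  have hfinal := congrArg (e.mapMatrix) key
  rw [RingHom.map_adjugate, RingHom.mapMatrix_apply, hmap, RingHom.mapMatrix_apply,
    matrix_map_smul, ← RingHom.mapMatrix_apply, hsum] at hfinal
  have hneg : e ((-1 : α[X]) ^ (Fintype.card ι - 1)) = (-1 : α) ^ (Fintype.card ι - 1) := by
    simp
  rw [hneg] at hfinal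
  exact hfinal

end Aux

lemma sum_pow_nthRoots {F : Type*} [Field F] {q : ℕ} {ζ : F} (hζ : IsPrimitiveRoot ζ q)
    (hq : 0 < q) (e : ℕ) :
    ∑ ω ∈ Polynomial.nthRootsFinset q (1 : F), ω ^ e = if q ∣ e then (q : F) else 0 := by
  haveI : NeZero q := ⟨hq.ne'⟩
  classical
  have himg : Polynomial.nthRootsFinset q (1 : F) = (Finset.range q).image (ζ ^ ·) := by
    ext x
    simp only [Polynomial.mem_nthRootsFinset hq (1 : F), Finset.mem_image, Finset.mem_range]
    constructor
    · intro hx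
      obtain ⟨i, hi, rfl⟩ := hζ.eq_pow_of_pow_eq_one hx
      exact ⟨i, hi, rfl⟩
    · rintro ⟨i, _, rfl⟩
      rw [← pow_mul, mul_comm, pow_mul, hζ.pow_eq_one, one_pow]
  rw [himg, Finset.sum_image (fun i hi j hj h =>
    hζ.pow_inj (Finset.mem_range.mp hi) (Finset.mem_range.mp hj) h)]
  simp_rw [← pow_mul, mul_comm, pow_mul]
  by_cases hdvd : q ∣ e
  · rw [if_pos hdvd, (hζ.pow_eq_one_iff_dvd e).mpr hdvd]
    simp
  · rw [if_neg hdvd]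
    have h1 : ζ ^ e ≠ 1 := fun h => hdvd ((hζ.pow_eq_one_iff_dvd e).mp h)
    rw [geom_sum_eq h1 q, ← pow_mul, mul_comm, pow_mul, hζ.pow_eq_one, one_pow,
      sub_self, zero_div]

lemma toMatrix_pow' {F M ι : Type*} [CommRing F] [AddCommGroup M] [Module F M]
    [Fintype ι] [DecidableEq ι] (b : Module.Basis ι F M) (l : M →ₗ[F] M) :
    ∀ i : ℕ, LinearMap.toMatrix b b (l ^ i) = (LinearMap.toMatrix b b l) ^ i
  | 0 => by simp [pow_zero, Module.End.one_eq_id, LinearMap.toMatrix_id]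
  | i + 1 => by
      rw [pow_succ, pow_succ, Module.End.mul_eq_comp, LinearMap.toMatrix_comp b b b,
        toMatrix_pow' b l i]


/-- Let `F` be a field of characteristic zero containing the `q`-th roots of unity
for some `q > D`, `M` a commutative `F`-algebra of dimension `D ≥ 1`, and `f, g ∈ M`.
Let `Q(t) = c_D t^D + ⋯ + c_0` be the determinant of multiplication by `t f - g` on
`M ⊗_F F[t]` (computed as `det(t·A - B)` for matrices `A, B` of `m_f, m_g`), and let
`f*` be the adjoint of `f` defined from the characteristic polynomial of `m_f`.
Then `Tr(f* g) = -c_{D-1}`, and consequently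
`Tr(f* g) = -(1/q) Σ_{ω ∈ G_q} N(ω f - g) ω^{1-D}`. -/
theorem stmt8 {F M : Type*} [Field F] [CharZero F] [CommRing M] [Algebra F M]
    [FiniteDimensional F M] (D : ℕ) (hD : D = Module.finrank F M) (hD1 : 1 ≤ D)
    (q : ℕ) (hq : D < q) (ζ : F) (hζ : IsPrimitiveRoot ζ q) (f g : M) :
    let b := Module.finBasis F M
    let A := (LinearMap.toMatrix b b (LinearMap.mulLeft F f)).map Polynomial.C
    let B := (LinearMap.toMatrix b b (LinearMap.mulLeft F g)).map Polynomial.C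
    let Q := (((Polynomial.X : Polynomial F) • A) - B).det
    let fstar := (-1 : F) ^ (D - 1) •
      ∑ i ∈ Finset.range D, ((LinearMap.mulLeft F f).charpoly.coeff (i + 1)) • f ^ i
    LinearMap.trace F M (LinearMap.mulLeft F (fstar * g)) = -Q.coeff (D - 1) ∧
    LinearMap.trace F M (LinearMap.mulLeft F (fstar * g)) =
      -(q : F)⁻¹ * ∑ ω ∈ Polynomial.nthRootsFinset q (1 : F),
        LinearMap.det (LinearMap.mulLeft F (ω • f - g)) * ω ^ ((1 : ℤ) - D) := by
  intro b A B Q fstar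
  classical
  have hq0 : 0 < q := by omega
  have hcard : Fintype.card (Fin (Module.finrank F M)) = D := by simp [hD]
  have h1card : 1 ≤ Fintype.card (Fin (Module.finrank F M)) := by rw [hcard]; exact hD1
  set A₀ := LinearMap.toMatrix b b (LinearMap.mulLeft F f) with hA₀
  set B₀ := LinearMap.toMatrix b b (LinearMap.mulLeft F g) with hB₀
  -- the matrix of mulLeft fstar is the adjugate of A₀
  have hfstarL : LinearMap.mulLeft F fstar = (-1 : F) ^ (D - 1) •
      ∑ i ∈ Finset.range D,
        ((LinearMap.mulLeft F f).charpoly.coeff (i + 1)) • LinearMap.mulLeft F (f ^ i) := by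
    apply LinearMap.ext
    intro y
    simp only [LinearMap.mulLeft_apply, LinearMap.smul_apply, LinearMap.sum_apply, fstar,
      smul_mul_assoc, Finset.sum_mul]
  have hMstar : LinearMap.toMatrix b b (LinearMap.mulLeft F fstar) = adjugate A₀ := by
    have hchar : A₀.charpoly = (LinearMap.mulLeft F f).charpoly := by
      rw [hA₀]; exact LinearMap.charpoly_toMatrix _ _
    rw [hfstarL, _root_.map_smul, map_sum, adjugate_eq_poly h1card A₀, hcard, hchar]
    refine congrArg _ (Finset.sum_congr rfl fun i _ => ?_)
    rw [_root_.map_smul, ← LinearMap.pow_mulLeft, toMatrix_pow']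
  have htr : LinearMap.trace F M (LinearMap.mulLeft F (fstar * g))
      = Matrix.trace (B₀ * adjugate A₀) := by
    rw [LinearMap.trace_eq_matrix_trace F b, LinearMap.mulLeft_mul,
      LinearMap.toMatrix_comp b b b, hMstar, Matrix.trace_mul_comm]
  have hco : Q.coeff (D - 1) = -Matrix.trace (B₀ * adjugate A₀) := by
    have h := coeff_det_X_smul_sub h1card A₀ B₀
    rw [hcard] at h
    exact h
  have part1 : LinearMap.trace F M (LinearMap.mulLeft F (fstar * g)) = -Q.coeff (D - 1) := by
    rw [htr, hco, neg_neg]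
  refine ⟨part1, ?_⟩
  rw [part1]
  -- part 2
  have hdeg : Q.natDegree < D + 1 := by
    have h := natDegree_det_X_smul_sub A₀ B₀
    rw [hcard] at h
    exact lt_of_le_of_lt h (Nat.lt_succ_self D)
  have hN : ∀ ω : F, LinearMap.det (LinearMap.mulLeft F (ω • f - g)) = Q.eval ω := by
    intro ω
    rw [← LinearMap.det_toMatrix b]
    have hl : LinearMap.mulLeft F (ω • f - g)
        = ω • LinearMap.mulLeft F f - LinearMap.mulLeft F g := by
      apply LinearMap.ext
      intro y
      simp [LinearMap.mulLeft_apply, sub_mul, smul_mul_assoc]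
    rw [hl, _root_.map_sub, _root_.map_smul]
    exact (eval_det_X_smul_sub A₀ B₀ ω).symm
  have hsum : ∑ ω ∈ Polynomial.nthRootsFinset q (1 : F), Q.eval ω * ω ^ ((1 : ℤ) - D)
      = Q.coeff (D - 1) * q := by
    have step1 : ∀ ω ∈ Polynomial.nthRootsFinset q (1 : F),
        Q.eval ω * ω ^ ((1 : ℤ) - D)
          = ∑ k ∈ Finset.range (D + 1), Q.coeff k * ω ^ (k + (q + 1 - D)) := by
      intro ω hω
      have hω1 : ω ^ q = 1 := (Polynomial.mem_nthRootsFinset hq0 (1 : F)).mp hω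
      have hω0 : ω ≠ 0 := by
        intro h
        rw [h, zero_pow hq0.ne'] at hω1
        exact one_ne_zero hω1.symm
      have hz : ω ^ ((1 : ℤ) - D) = ω ^ (q + 1 - D) := by
        rw [show (1 : ℤ) - D = ((q + 1 - D : ℕ) : ℤ) - (q : ℤ) by omega,
          zpow_sub₀ hω0, zpow_natCast, zpow_natCast, hω1, div_one]
      rw [hz, Polynomial.eval_eq_sum_range' hdeg, Finset.sum_mul]
      exact Finset.sum_congr rfl fun k _ => by rw [mul_assoc, ← pow_add]
    rw [Finset.sum_congr rfl step1, Finset.sum_comm]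
    have swap : ∀ k, ∑ ω ∈ Polynomial.nthRootsFinset q (1 : F), Q.coeff k * ω ^ (k + (q + 1 - D))
        = Q.coeff k * (if q ∣ (k + (q + 1 - D)) then (q : F) else 0) := fun k => by
      rw [← Finset.mul_sum, sum_pow_nthRoots hζ hq0]
    rw [Finset.sum_congr rfl fun k _ => swap k]
    rw [Finset.sum_eq_single (D - 1)]
    · rw [if_pos (by rw [show D - 1 + (q + 1 - D) = q by omega])]
    · intro k hk hne
      have hk' : k < D + 1 := Finset.mem_range.mp hk
      rw [if_neg, mul_zero]
      intro hdvd
      have hqm := Nat.le_of_dvd (by omega) hdvd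
      have hcases : k + (q + 1 - D) = q ∨ k + (q + 1 - D) = q + 1 := by omega
      rcases hcases with hc | hc
      · exact hne (by omega)
      · rw [hc] at hdvd
        have h1 : q ∣ 1 := by simpa using Nat.dvd_sub hdvd (dvd_refl q)
        have := Nat.le_of_dvd one_pos h1
        omega
    · intro h
      exact absurd (Finset.mem_range.mpr (by omega)) h
  rw [Finset.sum_congr rfl fun ω _ => by rw [hN ω], hsum]
  have hqF : (q : F) ≠ 0 := Nat.cast_ne_zero.mpr (by omega)
  field_simp
end
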